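/- arXiv:2601.03360 — 3 statements merged into one kernel-verified Lean document; each statement's English description precedes it below -/
import Mathlib

section
/- For a block upper-triangular matrix Ω = [[Ψ, M], [0, 0]] (with Ψ an n×n matrix, M an n×m matrix, and zero blocks of appropriate size), the matrix exponential is exp(Ω) = [[exp(Ψ), J(Ψ)·M], [0, I]], where J(Ψ) = Σ_{k≥0} Ψ^k/(k+1)! is the 'left Jacobian' series. -/
open Matrix

attribute [local instance] Matrix.linftyOpNormedRing Matrix.linftyOpNormedAlgebra

/-- The 'left Jacobian' series `J(Ψ) = Σ_{k≥0} Ψ^k/(k+1)!`. -/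
noncomputable def leftJacobian {n : ℕ} (Ψ : Matrix (Fin n) (Fin n) ℝ) :
    Matrix (Fin n) (Fin n) ℝ :=
  ∑' k : ℕ, (((k + 1).factorial : ℝ))⁻¹ • Ψ ^ k

/-- Embed the top-left block as a continuous linear map. -/
noncomputable def blockTL (n m : ℕ) :
    Matrix (Fin n) (Fin n) ℝ →L[ℝ] Matrix (Fin n ⊕ Fin m) (Fin n ⊕ Fin m) ℝ :=
  LinearMap.toContinuousLinearMap
    { toFun := fun A => Matrix.fromBlocks A 0 0 0
      map_add' := fun A B => by
        rw [Matrix.fromBlocks_add]; simp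
      map_smul' := fun c A => by
        rw [RingHom.id_apply, Matrix.fromBlocks_smul]; simp }

/-- Embed the top-right block as a continuous linear map. -/
noncomputable def blockTR (n m : ℕ) :
    Matrix (Fin n) (Fin m) ℝ →L[ℝ] Matrix (Fin n ⊕ Fin m) (Fin n ⊕ Fin m) ℝ :=
  LinearMap.toContinuousLinearMap
    { toFun := fun B => Matrix.fromBlocks 0 B 0 0
      map_add' := fun A B => by
        rw [Matrix.fromBlocks_add]; simp
      map_smul' := fun c A => by
        rw [RingHom.id_apply, Matrix.fromBlocks_smul]; simp }

/-- Right multiplication by `M` as a continuous linear map. -/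
noncomputable def mulRightCLM {n m : ℕ} (M : Matrix (Fin n) (Fin m) ℝ) :
    Matrix (Fin n) (Fin n) ℝ →L[ℝ] Matrix (Fin n) (Fin m) ℝ :=
  LinearMap.toContinuousLinearMap
    { toFun := fun A => A * M
      map_add' := fun A B => by
        show (A + B) * M = A * M + B * M
        rw [Matrix.add_mul]
      map_smul' := fun c A => by
        show (c • A) * M = c • (A * M)
        rw [Matrix.smul_mul] }

theorem summable_leftJacobian_series {n : ℕ} (Ψ : Matrix (Fin n) (Fin n) ℝ) :
    Summable fun k : ℕ => (((k + 1).factorial : ℝ))⁻¹ • Ψ ^ k := by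
  refine Summable.of_norm_bounded (NormedSpace.norm_expSeries_summable' (𝕂 := ℝ) Ψ) fun k => ?_
  rw [norm_smul, norm_smul]
  refine mul_le_mul_of_nonneg_right ?_ (norm_nonneg _)
  rw [Real.norm_eq_abs, Real.norm_eq_abs, abs_of_nonneg (by positivity),
    abs_of_nonneg (by positivity)]
  apply inv_anti₀
  · exact_mod_cast Nat.factorial_pos k
  · exact_mod_cast Nat.factorial_le (Nat.le_succ k)

set_option maxHeartbeats 1000000

/-- For the block upper-triangular matrix `Ω = [[Ψ, M], [0, 0]]`,
`exp(Ω) = [[exp(Ψ), J(Ψ)·M], [0, I]]`. -/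
theorem exp_block_upper_triangular {n m : ℕ}
    (Ψ : Matrix (Fin n) (Fin n) ℝ) (M : Matrix (Fin n) (Fin m) ℝ) :
    NormedSpace.exp (Matrix.fromBlocks Ψ M 0 0) =
      Matrix.fromBlocks (NormedSpace.exp Ψ) (leftJacobian Ψ * M)
        (0 : Matrix (Fin m) (Fin n) ℝ) (1 : Matrix (Fin m) (Fin m) ℝ) := by
  set Ω := Matrix.fromBlocks Ψ M 0 0 with hΩ
  -- powers of Ω
  have hpow : ∀ k : ℕ, Ω ^ (k + 1) = Matrix.fromBlocks (Ψ ^ (k + 1)) (Ψ ^ k * M) 0 0 := by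
    intro k
    induction k with
    | zero => simp [hΩ]
    | succ k ih =>
      rw [pow_succ' (n := k + 1), ih, hΩ, Matrix.fromBlocks_multiply]
      simp only [Matrix.mul_zero, Matrix.zero_mul, add_zero, zero_add]
      rw [← pow_succ', ← Matrix.mul_assoc, ← pow_succ']
  have hg := summable_leftJacobian_series Ψ
  have hΨsum : Summable fun k : ℕ => ((k.factorial : ℝ))⁻¹ • Ψ ^ k :=
    NormedSpace.expSeries_summable' (𝕂 := ℝ) Ψ
  have hΩsum : Summable fun k : ℕ => ((k.factorial : ℝ))⁻¹ • Ω ^ k :=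
    NormedSpace.expSeries_summable' (𝕂 := ℝ) Ω
  have ha : Summable fun k : ℕ => (((k + 1).factorial : ℝ))⁻¹ • Ψ ^ (k + 1) :=
    (summable_nat_add_iff 1).mpr hΨsum
  have hb : Summable fun k : ℕ => (((k + 1).factorial : ℝ))⁻¹ • (Ψ ^ k * M) := by
    have h := hg.map (mulRightCLM M) (mulRightCLM M).continuous
    refine h.congr fun k => ?_
    simp [mulRightCLM, Matrix.smul_mul]
  -- compute exp Ω
  simp only [NormedSpace.exp_eq_tsum (𝕂 := ℝ)]
  rw [Summable.tsum_eq_zero_add hΩsum]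
  have hshift : (fun k : ℕ => (((k + 1).factorial : ℝ))⁻¹ • Ω ^ (k + 1)) =
      fun k : ℕ => blockTL n m ((((k + 1).factorial : ℝ))⁻¹ • Ψ ^ (k + 1)) +
        blockTR n m ((((k + 1).factorial : ℝ))⁻¹ • (Ψ ^ k * M)) := by
    funext k
    simp only [blockTL, blockTR, LinearMap.coe_toContinuousLinearMap', LinearMap.coe_mk,
      AddHom.coe_mk, hpow k, Matrix.fromBlocks_smul]
    rw [Matrix.fromBlocks_add]
    simp [Matrix.fromBlocks_smul]
  have haL : Summable fun k : ℕ =>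
      blockTL n m ((((k + 1).factorial : ℝ))⁻¹ • Ψ ^ (k + 1)) :=
    ha.map _ (blockTL n m).continuous
  have hbL : Summable fun k : ℕ =>
      blockTR n m ((((k + 1).factorial : ℝ))⁻¹ • (Ψ ^ k * M)) :=
    hb.map _ (blockTR n m).continuous
  rw [hshift, Summable.tsum_add haL hbL,
    ← ContinuousLinearMap.map_tsum _ ha, ← ContinuousLinearMap.map_tsum _ hb]
  -- compute exp Ψ
  have hexpΨ : (∑' k : ℕ, ((k.factorial : ℝ))⁻¹ • Ψ ^ k) =
      1 + ∑' k : ℕ, (((k + 1).factorial : ℝ))⁻¹ • Ψ ^ (k + 1) := by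
    rw [Summable.tsum_eq_zero_add hΨsum]
    simp
  -- compute J(Ψ) * M
  have hJM : leftJacobian Ψ * M = ∑' k : ℕ, (((k + 1).factorial : ℝ))⁻¹ • (Ψ ^ k * M) := by
    rw [leftJacobian]
    have := ContinuousLinearMap.map_tsum (mulRightCLM M) hg
    simpa [mulRightCLM, Function.comp, Matrix.smul_mul] using this
  rw [hexpΨ, hJM]
  simp only [blockTL, blockTR, LinearMap.coe_toContinuousLinearMap', LinearMap.coe_mk,
    AddHom.coe_mk, pow_zero, Nat.factorial_zero, Nat.cast_one, inv_one, one_smul]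
  rw [← Matrix.fromBlocks_one, Matrix.fromBlocks_add, Matrix.fromBlocks_add]
  simp
end

section
/- Let ψ be a vector-valued polynomial function of (ϖ₁, ϖ₂) built from right-nested applications of the adjoint operator, and suppose Ω_n = [[ψ_n^⌣, M_n],[0,0]] with M_n = ∂ψ_n/∂ϖ₂ + ∂ψ_n/∂ϖ₁. If ψ_{n+1} = (w₁ϖ₁ + w₂ϖ₂)^⌣ ψ_n and Ω_{n+1} = [w₁A₁ + w₂A₂, Ω_n] where A_i = [[ϖ_i^⌣, I],[0,0]], then Ω_{n+1} = [[ψ_{n+1}^⌣, M_{n+1}],[0,0]] with M_{n+1} = (w₁ϖ₁ + w₂ϖ₂)^⌣ M_n − (w₁+w₂) ψ_n^⌣, where M_{n+1} = ∂ψ_{n+1}/∂ϖ₂ + ∂ψ_{n+1}/∂ϖ₁. -/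
open Matrix

/-- Induction step of the commutative-diagram equivalence: if
`Ωₙ = [[ψₙ^⌣, Mₙ],[0,0]]`, then with `ψ_{n+1} = (w₁ϖ₁ + w₂ϖ₂)^⌣ ψₙ` we have
`[w₁A₁ + w₂A₂, Ωₙ] = [[ψ_{n+1}^⌣, M_{n+1}],[0,0]]` where
`M_{n+1} = (w₁ϖ₁ + w₂ϖ₂)^⌣ Mₙ − (w₁+w₂) ψₙ^⌣`. -/
theorem magnus_block_induction_step {d : ℕ}
    (hat : (Fin d → ℝ) →ₗ[ℝ] Matrix (Fin d) (Fin d) ℝ)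
    (hhom : ∀ u v : Fin d → ℝ, hat (hat u *ᵥ v) = hat u * hat v - hat v * hat u)
    (ϖ₁ ϖ₂ : Fin d → ℝ) (w₁ w₂ : ℝ) (ψn : Fin d → ℝ)
    (Mn : Matrix (Fin d) (Fin d) ℝ)
    (A₁ A₂ Ωn : Matrix (Fin d ⊕ Fin d) (Fin d ⊕ Fin d) ℝ)
    (hA₁ : A₁ = Matrix.fromBlocks (hat ϖ₁) 1 0 0)
    (hA₂ : A₂ = Matrix.fromBlocks (hat ϖ₂) 1 0 0)
    (hΩn : Ωn = Matrix.fromBlocks (hat ψn) Mn 0 0) :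
    (w₁ • A₁ + w₂ • A₂) * Ωn - Ωn * (w₁ • A₁ + w₂ • A₂) =
      Matrix.fromBlocks (hat (hat (w₁ • ϖ₁ + w₂ • ϖ₂) *ᵥ ψn))
        (hat (w₁ • ϖ₁ + w₂ • ϖ₂) * Mn - (w₁ + w₂) • hat ψn) 0 0 := by
  subst hA₁ hA₂ hΩn
  rw [hhom]
  simp only [map_add, LinearMap.map_smul, Matrix.fromBlocks_smul, Matrix.fromBlocks_add,
    Matrix.fromBlocks_multiply, sub_eq_add_neg, Matrix.fromBlocks_neg, smul_zero]
  rw [Matrix.fromBlocks_inj]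
  refine ⟨by noncomm_ring, ?_, by simp, by simp⟩
  have : hat ψn * (w₁ • 1 + w₂ • 1) = (w₁ + w₂) • hat ψn := by
    rw [mul_add, mul_smul_comm, mul_smul_comm, mul_one, add_smul]
  rw [this]; noncomm_ring
end

section
/- If Q_c is a symmetric positive definite d×d matrix and h > 0, then the 2d×2d block matrix Q = [[(h³/3)Q_c, (h²/2)Q_c],[(h²/2)Q_c, h·Q_c]] is symmetric positive definite. -/
open Matrix

/-- If `Q_c` is symmetric positive definite and `h > 0`, then the block matrix
`Q = [[(h³/3)Q_c, (h²/2)Q_c],[(h²/2)Q_c, h·Q_c]]` is (symmetric) positive definite. -/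
theorem wnoa_process_noise_posDef {d : ℕ}
    (Qc : Matrix (Fin d) (Fin d) ℝ) (hQc : Qc.PosDef) (h : ℝ) (hh : 0 < h) :
    (Matrix.fromBlocks ((h ^ 3 / 3) • Qc) ((h ^ 2 / 2) • Qc)
        ((h ^ 2 / 2) • Qc) (h • Qc)).PosDef := by
  obtain ⟨hHerm, hpos⟩ := posDef_iff_dotProduct_mulVec.1 hQc
  have hPSD : Qc.PosSemidef := Matrix.PosDef.posSemidef (posDef_iff_dotProduct_mulVec.2 ⟨hHerm, hpos⟩)
  have hsymm : Qcᵀ = Qc := hHerm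
  have hsym : ∀ a b : Fin d → ℝ, a ⬝ᵥ (Qc *ᵥ b) = b ⬝ᵥ (Qc *ᵥ a) := by
    intro a b
    rw [dotProduct_mulVec, ← mulVec_transpose, hsymm, dotProduct_comm]
  rw [posDef_iff_dotProduct_mulVec]
  constructor
  · refine Matrix.isHermitian_fromBlocks_iff.2 ⟨?_, ?_, ?_, ?_⟩ <;>
      simp [Matrix.IsHermitian, conjTranspose_smul, hHerm.eq, hsymm]
  · intro x hx
    set u : Fin d → ℝ := x ∘ Sum.inl with hu
    set v : Fin d → ℝ := x ∘ Sum.inr with hv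
    have hx' : x = Sum.elim u v := (Sum.elim_comp_inl_inr x).symm
    have hstar : star x = x := star_trivial x
    rw [hstar, hx', fromBlocks_mulVec, sumElim_dotProduct_sumElim]
    simp only [Sum.elim_comp_inl, Sum.elim_comp_inr]
    have key :
        u ⬝ᵥ (((h ^ 3 / 3) • Qc) *ᵥ u + ((h ^ 2 / 2) • Qc) *ᵥ v) +
          v ⬝ᵥ (((h ^ 2 / 2) • Qc) *ᵥ u + (h • Qc) *ᵥ v) =
        (h ^ 3 / 12) * (u ⬝ᵥ (Qc *ᵥ u)) +
          h * ((v + (h / 2) • u) ⬝ᵥ (Qc *ᵥ (v + (h / 2) • u))) := by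
      have expand : (v + (h / 2) • u) ⬝ᵥ (Qc *ᵥ (v + (h / 2) • u)) =
          v ⬝ᵥ (Qc *ᵥ v) + (h / 2) * (v ⬝ᵥ (Qc *ᵥ u)) + (h / 2) * (u ⬝ᵥ (Qc *ᵥ v)) +
            (h / 2) * ((h / 2) * (u ⬝ᵥ (Qc *ᵥ u))) := by
        simp [mulVec_add, mulVec_smul, dotProduct_add, add_dotProduct, smul_dotProduct,
          dotProduct_smul, smul_eq_mul]
        ring
      rw [expand]
      simp [smul_mulVec, dotProduct_add, dotProduct_smul, smul_eq_mul, hsym u v]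
      ring
    rw [key]
    rcases eq_or_ne u 0 with hu0 | hu0
    · have hv0 : v ≠ 0 := by
        intro hv0
        apply hx
        rw [hx', hu0, hv0]
        ext (i | i) <;> simp
      have hw : v + (h / 2) • u ≠ 0 := by simpa [hu0] using hv0
      have h1 : (0:ℝ) ≤ u ⬝ᵥ (Qc *ᵥ u) := by simpa using hPSD.dotProduct_mulVec_nonneg u
      have h2 : 0 < (v + (h / 2) • u) ⬝ᵥ (Qc *ᵥ (v + (h / 2) • u)) := by
        simpa using hpos hw
      have := pow_pos hh 3
      positivity
    · have h1 : 0 < u ⬝ᵥ (Qc *ᵥ u) := by simpa using hpos hu0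
      have h2 : (0:ℝ) ≤ (v + (h / 2) • u) ⬝ᵥ (Qc *ᵥ (v + (h / 2) • u)) := by
        simpa using hPSD.dotProduct_mulVec_nonneg (v + (h / 2) • u)
      have h3 : 0 < h ^ 3 := pow_pos hh 3
      nlinarith
end
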